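/- Work in ℝ³ with the standard inner product. Let b > 0, set b̂ = (0,0,2b), rb1 = (0,0,−b), rb2 = (0,0,b). Let r1, r2 ∈ ℝ³ with r1 ≠ r2, r1 ≠ rb1, r2 ≠ rb2, and suppose neither r1 − rb1 nor r2 − rb2 is a scalar multiple of b̂. Let x1, x2 ∈ ℝ³ be unit vectors satisfying: ⟨x1, r1 − r2⟩ = 0, ⟨x2, r1 − r2⟩ = 0, ⟨x1, r1 − rb1⟩ = 0, ⟨x2, r2 − rb2⟩ = 0, ⟨x1, b̂⟩ = 0, and ⟨x2, b̂⟩ = 0. Then ⟨x1, x2⟩ = 1 or ⟨x1, x2⟩ = −1. -/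

import Mathlib

open RealInnerProductSpace

lemma stmt12_key (p q a1 a2 c1 c2 : ℝ) (hpq : p ≠ 0 ∨ q ≠ 0)
    (ha : a1^2 + a2^2 = 1) (hc : c1^2 + c2^2 = 1)
    (e1 : a1*p + a2*q = 0) (e2 : c1*p + c2*q = 0) :
    a1*c1 + a2*c2 = 1 ∨ a1*c1 + a2*c2 = -1 := by
  have hcross : a1*c2 - a2*c1 = 0 := by
    rcases hpq with hp | hq
    · have : (a1*c2 - a2*c1) * p = 0 := by linear_combination c2*e1 - a2*e2
      exact (mul_eq_zero.mp this).resolve_right hp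
    · have : (a1*c2 - a2*c1) * q = 0 := by linear_combination a1*e2 - c1*e1
      exact (mul_eq_zero.mp this).resolve_right hq
  have hsq : (a1*c1 + a2*c2 - 1) * (a1*c1 + a2*c2 + 1) = 0 := by nlinarith
  rcases mul_eq_zero.mp hsq with h | h
  · left; linarith
  · right; linarith

/-- Lemma 5.1 in ℝ³ — if both unit heading vectors are orthogonal
to the inter-agent vector and the beacon axis (and each is orthogonal to its own
beacon baseline), and the baselines are not parallel to the beacon axis, then
the headings satisfy ⟨x1, x2⟩ = ±1. -/
theorem stmt12 (b : ℝ) (hb : b > 0)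
    (r1 r2 x1 x2 bhat rb1 rb2 : EuclideanSpace ℝ (Fin 3))
    (hbhat : bhat = (WithLp.equiv 2 (Fin 3 → ℝ)).symm ![0, 0, 2 * b])
    (hrb1 : rb1 = (WithLp.equiv 2 (Fin 3 → ℝ)).symm ![0, 0, -b])
    (hrb2 : rb2 = (WithLp.equiv 2 (Fin 3 → ℝ)).symm ![0, 0, b])
    (hne : r1 ≠ r2) (hne1 : r1 ≠ rb1) (hne2 : r2 ≠ rb2)
    (hnp1 : ∀ c : ℝ, r1 - rb1 ≠ c • bhat)
    (hnp2 : ∀ c : ℝ, r2 - rb2 ≠ c • bhat)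
    (hx1 : ‖x1‖ = 1) (hx2 : ‖x2‖ = 1)
    (h1 : ⟪x1, r1 - r2⟫ = 0) (h2 : ⟪x2, r1 - r2⟫ = 0)
    (h3 : ⟪x1, r1 - rb1⟫ = 0) (h4 : ⟪x2, r2 - rb2⟫ = 0)
    (h5 : ⟪x1, bhat⟫ = 0) (h6 : ⟪x2, bhat⟫ = 0) :
    ⟪x1, x2⟫ = 1 ∨ ⟪x1, x2⟫ = -1 := by
  have hb' : (2:ℝ) * b ≠ 0 := by positivity
  subst hbhat hrb1 hrb2
  have hn1 : ⟪x1, x1⟫ = 1 := by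
    rw [real_inner_self_eq_norm_sq, hx1]; norm_num
  have hn2 : ⟪x2, x2⟫ = 1 := by
    rw [real_inner_self_eq_norm_sq, hx2]; norm_num
  simp only [PiLp.inner_apply, RCLike.inner_apply, conj_trivial, Fin.sum_univ_three,
    PiLp.sub_apply, WithLp.equiv_symm_apply, WithLp.ofLp_toLp, Matrix.cons_val_zero, Matrix.cons_val_one,
    Matrix.head_cons, Matrix.cons_val_two, Matrix.tail_cons] at h1 h2 h3 h4 h5 h6 hn1 hn2 ⊢
  -- third coordinates of x1, x2 vanish
  have hz1 : x1 2 = 0 := by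
    have h5' : x1 2 * (2 * b) = 0 := by linarith
    exact (mul_eq_zero.mp h5').resolve_right hb'
  have hz2 : x2 2 = 0 := by
    have h6' : x2 2 * (2 * b) = 0 := by linarith
    exact (mul_eq_zero.mp h6').resolve_right hb'
  rw [hz1] at hn1 h1 h3
  rw [hz2] at hn2 h2 h4
  rw [hz1, hz2]
  simp only [mul_zero, zero_mul, add_zero, sub_neg_eq_add, sub_zero] at h1 h2 h3 h4 hn1 hn2 ⊢
  by_cases hd : r1 0 - r2 0 = 0 ∧ r1 1 - r2 1 = 0
  · -- inter-agent vector along z-axis; use baselines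
    obtain ⟨hd0, hd1⟩ := hd
    have hw : r1 0 ≠ 0 ∨ r1 1 ≠ 0 := by
      by_contra h
      push_neg at h
      apply hnp1 ((r1 2 + b) / (2 * b))
      ext i
      fin_cases i <;>
        simp [PiLp.sub_apply, WithLp.equiv_symm_apply, WithLp.ofLp_toLp, h.1, h.2] <;>
        field_simp
    have e2' : x2 0 * r1 0 + x2 1 * r1 1 = 0 := by
      have hr20 : r2 0 = r1 0 := by linarith
      have hr21 : r2 1 = r1 1 := by linarith
      rw [hr20, hr21] at h4; linarith
    have hpq : r1 0 ≠ 0 ∨ r1 1 ≠ 0 := hw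
    have := stmt12_key (r1 0) (r1 1) (x1 0) (x1 1) (x2 0) (x2 1) hpq
      (by linear_combination hn1) (by linear_combination hn2) (by linarith) (by linarith)
    rcases this with h | h
    · left; linarith
    · right; linarith
  · -- inter-agent vector has nonzero xy part
    have hpq : r1 0 - r2 0 ≠ 0 ∨ r1 1 - r2 1 ≠ 0 := by
      by_contra h; push_neg at h; exact hd ⟨h.1, h.2⟩
    have := stmt12_key (r1 0 - r2 0) (r1 1 - r2 1) (x1 0) (x1 1) (x2 0) (x2 1) hpq
      (by linear_combination hn1) (by linear_combination hn2) (by linarith) (by linarith)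
    rcases this with h | h
    · left; linarith
    · right; linarith
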